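/- arXiv:2305.00728 — 2 statements merged into one kernel-verified Lean document; each statement's English description precedes it below -/
import Mathlib

section
/- Let 0 < γ < 2, let f : (0,1) → ℝ be continuous, bounded and everywhere positive, and let u : (0,1) → ℝ be a bounded C² function satisfying 𝓜⁻[u](r) ≤ −f(r)·r^{−γ} for all r ∈ (0,1). Then there exists r₀ ∈ (0,1) such that u'(r) ≤ 0 for all r ∈ (0,r₀), lim_{r→0⁺} u'(r)·r^{Ñ₋−1} = 0, and u'(r) ≤ −(inf_{(0,1)} f)/(Λ·(Ñ₋−γ))·r^{1−γ} for all r ∈ (0,r₀). If moreover 𝓜⁻[u](r) = −f(r)·r^{−γ} on (0,1), then there exists c > 0 with |u'(r)| ≤ c·r^{1−γ} for all r ∈ (0,r₀). -/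
set_option maxHeartbeats 1000000


open Set Real Filter MeasureTheory

noncomputable section

/-- The radial expression of the Pucci maximal operator `𝓜⁺` applied to a radial
function `u = u(r)`. -/
def pucciP (lam Lam : ℝ) (N : ℕ) (u : ℝ → ℝ) (r : ℝ) : ℝ :=
  Lam * max (deriv (deriv u) r) 0 - lam * max (-(deriv (deriv u) r)) 0 +
  ((N : ℝ) - 1) * (Lam * max (deriv u r / r) 0 - lam * max (-(deriv u r / r)) 0)

/-- The radial expression of the Pucci minimal operator `𝓜⁻` applied to a radial
function `u = u(r)`. -/
def pucciM (lam Lam : ℝ) (N : ℕ) (u : ℝ → ℝ) (r : ℝ) : ℝ :=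
  lam * max (deriv (deriv u) r) 0 - Lam * max (-(deriv (deriv u) r)) 0 +
  ((N : ℝ) - 1) * (lam * max (deriv u r / r) 0 - Lam * max (-(deriv u r / r)) 0)

/-- The radial principal eigenvalue `λ̄'_γ` on the punctured unit ball for a radial
operator `Op`. -/
def radialEVop (Op : (ℝ → ℝ) → ℝ → ℝ) (γ : ℝ) : ℝ :=
  sSup {μ : ℝ | ∃ u : ℝ → ℝ, ContDiffOn ℝ 2 u (Ioo 0 1) ∧
    (∀ r ∈ Ioo (0:ℝ) 1, 0 < u r) ∧
    (∀ r ∈ Ioo (0:ℝ) 1, Op u r + μ * u r * r ^ (-γ) ≤ 0)}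

lemma antitone_helper {F G : ℝ → ℝ} {a b : ℝ} (hab : a ≤ b)
    (hF : ∀ x ∈ Icc a b, HasDerivAt F (G x) x)
    (hG : ∀ x ∈ Ioo a b, G x ≤ 0) : F b ≤ F a := by
  have h1 : AntitoneOn F (Icc a b) := by
    apply antitoneOn_of_deriv_nonpos (convex_Icc a b)
    · exact fun x hx => (hF x hx).continuousAt.continuousWithinAt
    · intro x hx
      rw [interior_Icc] at hx
      exact (hF x (Ioo_subset_Icc_self hx)).differentiableAt.differentiableWithinAt
    · intro x hx
      rw [interior_Icc] at hx
      rw [(hF x (Ioo_subset_Icc_self hx)).deriv]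
      exact hG x hx
  exact h1 (left_mem_Icc.2 hab) (right_mem_Icc.2 hab) hab

lemma monotone_helper {F G : ℝ → ℝ} {a b : ℝ} (hab : a ≤ b)
    (hF : ∀ x ∈ Icc a b, HasDerivAt F (G x) x)
    (hG : ∀ x ∈ Ioo a b, 0 ≤ G x) : F a ≤ F b := by
  have := antitone_helper (F := fun x => -F x) (G := fun x => -G x) hab
    (fun x hx => (hF x hx).neg) (fun x hx => neg_nonpos.2 (hG x hx))
  simp only [neg_le_neg_iff] at this
  exact this

lemma aux_unbdd {φ φ' : ℝ → ℝ} {C a r₁ : ℝ} (hr₁ : r₁ ∈ Ioo (0:ℝ) 1) (ha : 0 < a)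
    (hφ : ∀ r ∈ Ioo (0:ℝ) 1, HasDerivAt φ (φ' r) r)
    (hC : ∀ r ∈ Ioo (0:ℝ) 1, |φ r| ≤ C)
    (hd : ∀ r ∈ Ioo (0:ℝ) r₁, a / r ≤ φ' r) : False := by
  obtain ⟨hr₁0, hr₁1⟩ := hr₁
  set A : ℝ := φ r₁ - a * Real.log r₁ + C with hA
  set ε : ℝ := min (r₁/2) (Real.exp ((-A-1)/a)) with hεdef
  have hε0 : 0 < ε := lt_min (by linarith) (Real.exp_pos _)
  have hεr : ε < r₁ := lt_of_le_of_lt (min_le_left _ _) (by linarith)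
  have hsub : Icc ε r₁ ⊆ Ioo (0:ℝ) 1 :=
    fun x hx => ⟨lt_of_lt_of_le hε0 hx.1, lt_of_le_of_lt hx.2 hr₁1⟩
  have key : φ ε - a * Real.log ε ≤ φ r₁ - a * Real.log r₁ := by
    apply monotone_helper (F := fun x => φ x - a * Real.log x)
      (G := fun x => φ' x - a * x⁻¹) hεr.le
    · intro x hx
      exact (hφ x (hsub hx)).sub ((Real.hasDerivAt_log (lt_of_lt_of_le hε0 hx.1).ne').const_mul a)
    · intro x hx
      have h1 := hd x ⟨lt_trans hε0 hx.1, hx.2⟩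
      rw [div_eq_mul_inv] at h1
      linarith [h1]
  have hφε := abs_le.1 (hC ε ⟨hε0, lt_trans hεr hr₁1⟩)
  have h1 : -(a * Real.log ε) ≤ A := by linarith [hφε.1]
  have h2 : Real.log ε ≤ (-A-1)/a := by
    calc Real.log ε ≤ Real.log (Real.exp ((-A-1)/a)) :=
          Real.log_le_log hε0 (min_le_right _ _)
      _ = (-A-1)/a := Real.log_exp _
  have h3 : a * Real.log ε ≤ -A-1 := by
    have := mul_le_mul_of_nonneg_left h2 ha.le
    rwa [mul_div_cancel₀ _ ha.ne'] at this
  linarith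

theorem stmt9 (N : ℕ) (hN : 2 ≤ N) (lam Lam : ℝ) (hlam : 0 < lam) (hlL : lam ≤ Lam)
    (hNp : 2 < lam / Lam * ((N : ℝ) - 1) + 1)
    (Nm : ℝ) (hNmdef : Nm = Lam / lam * ((N : ℝ) - 1) + 1)
    (γ : ℝ) (hγ0 : 0 < γ) (hγ2 : γ < 2)
    (f : ℝ → ℝ) (hfc : ContinuousOn f (Ioo 0 1))
    (hfb : ∃ C : ℝ, ∀ r ∈ Ioo (0:ℝ) 1, |f r| ≤ C)
    (hfpos : ∀ r ∈ Ioo (0:ℝ) 1, 0 < f r)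
    (u : ℝ → ℝ) (hu : ContDiffOn ℝ 2 u (Ioo 0 1))
    (hub : ∃ C : ℝ, ∀ r ∈ Ioo (0:ℝ) 1, |u r| ≤ C)
    (hineq : ∀ r ∈ Ioo (0:ℝ) 1, pucciM lam Lam N u r ≤ -(f r * r ^ (-γ))) :
    ∃ r₀ ∈ Ioo (0:ℝ) 1,
      (∀ r ∈ Ioo (0:ℝ) r₀, deriv u r ≤ 0) ∧
      Tendsto (fun r => deriv u r * r ^ (Nm - 1)) (nhdsWithin 0 (Ioi 0)) (nhds 0) ∧
      (∀ r ∈ Ioo (0:ℝ) r₀,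
        deriv u r ≤ -(sInf (f '' Ioo 0 1) / (Lam * (Nm - γ))) * r ^ (1 - γ)) ∧
      ((∀ r ∈ Ioo (0:ℝ) 1, pucciM lam Lam N u r = -(f r * r ^ (-γ))) →
        ∃ c : ℝ, 0 < c ∧ ∀ r ∈ Ioo (0:ℝ) r₀, |deriv u r| ≤ c * r ^ (1 - γ)) := by
  obtain ⟨C, hC⟩ := hub
  obtain ⟨Cf, hCf⟩ := hfb
  have hLam : 0 < Lam := lt_of_lt_of_le hlam hlL
  have hN2 : (2:ℝ) ≤ (N:ℝ) := by exact_mod_cast hN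
  set β : ℝ := lam / Lam * ((N : ℝ) - 1) with hβdef
  have hβ1 : 1 < β := by linarith
  have hq1 : Lam * β = lam * ((N:ℝ) - 1) := by
    rw [hβdef]; field_simp
  have hq2 : lam * (Nm - 1) = Lam * ((N:ℝ) - 1) := by
    rw [hNmdef]; field_simp; ring
  have hll1 : 1 ≤ Lam / lam := (one_le_div hlam).2 hlL
  have hNm1 : 1 ≤ Nm - 1 := by rw [hNmdef]; nlinarith
  have hNmge : (N:ℝ) - 1 ≤ Nm - 1 := by rw [hNmdef]; nlinarith
  have hγNm : 0 < Nm - γ := by linarith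
  have hγNp : 0 < β + 1 - γ := by linarith
  -- derivative infrastructure
  have hud : ∀ r ∈ Ioo (0:ℝ) 1, HasDerivAt u (deriv u r) r := by
    intro r hr
    exact ((hu.differentiableOn (by norm_num)).differentiableAt
      (isOpen_Ioo.mem_nhds hr)).hasDerivAt
  have hudd : ∀ r ∈ Ioo (0:ℝ) 1, HasDerivAt (deriv u) (deriv (deriv u) r) r := by
    intro r hr
    have h1 : ContDiffOn ℝ 1 (deriv u) (Ioo 0 1) :=
      hu.deriv_of_isOpen isOpen_Ioo (by norm_num)
    exact ((h1.differentiableOn (by norm_num)).differentiableAt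
      (isOpen_Ioo.mem_nhds hr)).hasDerivAt
  have hwD : ∀ (p : ℝ), ∀ r ∈ Ioo (0:ℝ) 1, HasDerivAt (fun x => deriv u x * x ^ p)
      ((deriv (deriv u) r + p * (deriv u r / r)) * r ^ p) r := by
    intro p r hr
    have h1 := (hudd r hr).mul
      (Real.hasDerivAt_rpow_const (x := r) (p := p) (Or.inl hr.1.ne'))
    refine h1.congr_deriv ?_
    rw [Real.rpow_sub_one hr.1.ne']
    field_simp
  have hpowle : ∀ (p : ℝ), 1 ≤ p → ∀ x : ℝ, x ∈ Ioo (0:ℝ) 1 → x ^ p ≤ x := by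
    intro p hp x hx
    calc x ^ p ≤ x ^ (1:ℝ) := Real.rpow_le_rpow_of_exponent_ge hx.1 hx.2.le hp
      _ = x := Real.rpow_one x
  have hF0 : ∀ r ∈ Ioo (0:ℝ) 1, 0 < f r * r ^ (-γ) :=
    fun r hr => mul_pos (hfpos r hr) (Real.rpow_pos_of_pos hr.1 _)
  -- pointwise keys
  have hkey1 : ∀ r ∈ Ioo (0:ℝ) 1, 0 ≤ deriv u r →
      Lam * (deriv (deriv u) r + β * (deriv u r / r)) ≤ -(f r * r ^ (-γ)) := by
    intro r hr hsign
    have hP := hineq r hr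
    have hFr := hF0 r hr
    unfold pucciM at hP
    set s := deriv (deriv u) r with hs
    set t := deriv u r / r with ht
    have ht0 : 0 ≤ t := div_nonneg hsign hr.1.le
    rw [max_eq_left ht0, max_eq_right (neg_nonpos.2 ht0)] at hP
    have e1 : Lam * (s + β * t) = Lam * s + (lam * ((N:ℝ) - 1)) * t := by
      rw [← hq1]; ring
    rcases le_or_gt 0 s with hs0 | hs0
    · exfalso
      rw [max_eq_left hs0, max_eq_right (neg_nonpos.2 hs0)] at hP
      nlinarith [mul_nonneg hlam.le hs0, mul_nonneg (by linarith : (0:ℝ) ≤ (N:ℝ) - 1)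
        (mul_nonneg hlam.le ht0)]
    · rw [max_eq_right hs0.le, max_eq_left (neg_nonneg.2 hs0.le)] at hP
      rw [e1]
      linarith [hP]
  have hkey2 : ∀ r ∈ Ioo (0:ℝ) 1, deriv u r ≤ 0 →
      Lam * (deriv (deriv u) r + (Nm - 1) * (deriv u r / r)) ≤ -(f r * r ^ (-γ)) := by
    intro r hr hsign
    have hP := hineq r hr
    have hFr := hF0 r hr
    unfold pucciM at hP
    set s := deriv (deriv u) r with hs
    set t := deriv u r / r with ht
    have ht0 : t ≤ 0 := div_nonpos_of_nonpos_of_nonneg hsign hr.1.le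
    rw [max_eq_right ht0, max_eq_left (neg_nonneg.2 ht0)] at hP
    rcases le_or_gt 0 s with hs0 | hs0
    · rw [max_eq_left hs0, max_eq_right (neg_nonpos.2 hs0)] at hP
      -- hP : lam * s + ((N:ℝ)-1) * (lam * 0 - Lam * (-t)) ≤ -(f r * r^(-γ))
      have e1 : lam * (Lam * (s + (Nm - 1) * t)) =
          Lam * (lam * s) + (Lam * Lam) * (((N:ℝ) - 1) * t) := by
        rw [hNmdef]; field_simp; ring
      have h2 := mul_le_mul_of_nonneg_left hP hLam.le
      have h3 : 0 ≤ (Lam - lam) * (f r * r ^ (-γ)) :=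
        mul_nonneg (by linarith) hFr.le
      have h4 : lam * (Lam * (s + (Nm - 1) * t)) ≤ lam * (-(f r * r ^ (-γ))) := by
        rw [e1]; linarith [h2, h3]
      exact le_of_mul_le_mul_left h4 hlam
    · rw [max_eq_right hs0.le, max_eq_left (neg_nonneg.2 hs0.le)] at hP
      -- hP : lam * 0 - Lam * (-s) + ((N:ℝ)-1) * (lam * 0 - Lam * (-t)) ≤ -F
      have h4 : Lam * (Nm - 1) * t ≤ Lam * ((N:ℝ) - 1) * t := by
        apply mul_le_mul_of_nonpos_right _ ht0
        exact mul_le_mul_of_nonneg_left hNmge hLam.le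
      linarith [hP, h4]
  have hkey3 : ∀ r ∈ Ioo (0:ℝ) 1, deriv u r ≤ 0 →
      pucciM lam Lam N u r ≤ Lam * (deriv (deriv u) r + β * (deriv u r / r)) := by
    intro r hr hsign
    unfold pucciM
    set s := deriv (deriv u) r with hs
    set t := deriv u r / r with ht
    have ht0 : t ≤ 0 := div_nonpos_of_nonpos_of_nonneg hsign hr.1.le
    rw [max_eq_right ht0, max_eq_left (neg_nonneg.2 ht0)]
    have hs1 : max s 0 - max (-s) 0 = s := max_zero_sub_max_neg_zero_eq_self s
    have hs2 : (0:ℝ) ≤ max s 0 := le_max_right s 0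
    have e1 : Lam * (s + β * t) = Lam * s + (lam * ((N:ℝ) - 1)) * t := by
      rw [← hq1]; ring
    rw [e1]
    have h3 : 0 ≤ (Lam - lam) * max s 0 := mul_nonneg (by linarith) hs2
    have h4 : 0 ≤ ((N:ℝ) - 1) * ((Lam - lam) * (-t)) :=
      mul_nonneg (by linarith) (mul_nonneg (by linarith) (by linarith))
    have hs1' : Lam * s = Lam * max s 0 - Lam * max (-s) 0 := by
      linear_combination (-Lam) * hs1
    linarith [h3, h4, hs1']
  -- u' ≤ 0 on (0,1)
  have hule : ∀ r ∈ Ioo (0:ℝ) 1, deriv u r ≤ 0 := by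
    by_contra hcon
    push_neg at hcon
    obtain ⟨r₁, hr₁, hpos⟩ := hcon
    set S : Set ℝ := {r | r ∈ Ioo (0:ℝ) r₁ ∧ deriv u r ≤ 0} with hS
    set a := sSup (insert (0:ℝ) S) with ha
    have hbdd : BddAbove (insert (0:ℝ) S) := by
      refine ⟨r₁, ?_⟩
      rintro x (rfl | hx)
      · exact hr₁.1.le
      · exact hx.1.2.le
    have ha0 : 0 ≤ a := le_csSup hbdd (mem_insert 0 S)
    have har : a ≤ r₁ := csSup_le (insert_nonempty _ _)
      (by rintro x (rfl | hx); exacts [hr₁.1.le, hx.1.2.le])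
    have ha1 : a < 1 := lt_of_le_of_lt har hr₁.2
    have hup : ∀ x, a < x → x < r₁ → 0 < deriv u x := by
      intro x hax hxr
      by_contra hle
      push_neg at hle
      have hxS : x ∈ S := ⟨⟨lt_of_le_of_lt ha0 hax, hxr⟩, hle⟩
      exact absurd (le_csSup hbdd (mem_insert_of_mem _ hxS)) (not_le.2 hax)
    set w : ℝ → ℝ := fun x => deriv u x * x ^ β with hwdef
    have hwanti : ∀ x, a < x → x < r₁ → w r₁ ≤ w x := by
      intro x hax hxr
      have hx0 : 0 < x := lt_of_le_of_lt ha0 hax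
      apply antitone_helper
        (G := fun y => (deriv (deriv u) y + β * (deriv u y / y)) * y ^ β) hxr.le
      · intro y hy
        exact hwD β y ⟨lt_of_lt_of_le hx0 hy.1, lt_of_le_of_lt hy.2 hr₁.2⟩
      · intro y hy
        have hy01 : y ∈ Ioo (0:ℝ) 1 := ⟨lt_trans hx0 hy.1, lt_trans hy.2 hr₁.2⟩
        have hdupos : 0 ≤ deriv u y := (hup y (lt_trans hax hy.1) hy.2).le
        have h1 := hkey1 y hy01 hdupos
        have h2 := hF0 y hy01
        have h3 : deriv (deriv u) y + β * (deriv u y / y) ≤ 0 := by nlinarith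
        exact mul_nonpos_of_nonpos_of_nonneg h3 (Real.rpow_nonneg hy01.1.le β)
    have hwr₁ : 0 < w r₁ := mul_pos hpos (Real.rpow_pos_of_pos hr₁.1 β)
    rcases eq_or_lt_of_le ha0 with ha0' | ha0'
    · -- a = 0 : u' > 0 on all of (0, r₁), contradiction with boundedness
      refine aux_unbdd (φ := u) (φ' := deriv u) hr₁ hwr₁ hud hC ?_
      intro x hx
      have hax : a < x := by rw [← ha0']; exact hx.1
      have hx01 : x ∈ Ioo (0:ℝ) 1 := ⟨hx.1, lt_trans hx.2 hr₁.2⟩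
      have h1 : w r₁ ≤ deriv u x * x ^ β := hwanti x hax hx.2
      have hdux : 0 < deriv u x := hup x hax hx.2
      rw [div_le_iff₀ hx.1]
      calc w r₁ ≤ deriv u x * x ^ β := h1
        _ ≤ deriv u x * x := mul_le_mul_of_nonneg_left (hpowle β hβ1.le x hx01) hdux.le
    · -- a > 0 : u'(a) ≤ 0 and continuity give a contradiction
      have haI : a ∈ Ioo (0:ℝ) 1 := ⟨ha0', ha1⟩
      have hconta : ContinuousAt (deriv u) a :=
        (hudd a haI).differentiableAt.continuousAt
      have hua : deriv u a ≤ 0 := by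
        by_contra hua'
        push_neg at hua'
        have hev : ∀ᶠ x in nhds a, 0 < deriv u x :=
          hconta.eventually (eventually_gt_nhds hua')
        obtain ⟨δ, hδ0, hδ⟩ := Metric.eventually_nhds_iff.1 hev
        have hbd2 : ∀ x ∈ insert (0:ℝ) S, x ≤ max 0 (a - δ) := by
          rintro x (rfl | hx)
          · exact le_max_left _ _
          · refine le_max_of_le_right ?_
            by_contra hxx
            push_neg at hxx
            have hxa : x ≤ a := le_csSup hbdd (mem_insert_of_mem _ hx)
            have hdist : dist x a < δ := by
              rw [Real.dist_eq, abs_lt]; constructor <;> linarith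
            exact absurd hx.2 (not_le.2 (hδ hdist))
        have hle1 : a ≤ max 0 (a - δ) := csSup_le (insert_nonempty _ _) hbd2
        have hlt1 : max 0 (a - δ) < a := max_lt ha0' (by linarith)
        linarith
      have haw : w a ≤ 0 :=
        mul_nonpos_of_nonpos_of_nonneg hua (Real.rpow_nonneg haI.1.le β)
      have har' : a < r₁ := by
        rcases eq_or_lt_of_le har with h | h
        · exfalso; rw [h] at hua; linarith
        · exact h
      have hwc : ContinuousAt w a := by
        exact hconta.mul (Real.continuousAt_rpow_const a β (Or.inl haI.1.ne'))
      have hlim : Tendsto w (nhdsWithin a (Ioi a)) (nhds (w a)) :=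
        hwc.tendsto.mono_left nhdsWithin_le_nhds
      have hev2 : ∀ᶠ x in nhdsWithin a (Ioi a), w r₁ ≤ w x := by
        filter_upwards [Ioo_mem_nhdsGT har'] with x hx
        exact hwanti x hx.1 hx.2
      have : w r₁ ≤ w a := ge_of_tendsto hlim hev2
      linarith
  -- v = u' r^(Nm-1)
  set v : ℝ → ℝ := fun r => deriv u r * r ^ (Nm - 1) with hvdef
  have hvG : ∀ r ∈ Ioo (0:ℝ) 1,
      (deriv (deriv u) r + (Nm - 1) * (deriv u r / r)) * r ^ (Nm - 1) ≤ 0 := by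
    intro r hr
    have h1 := hkey2 r hr (hule r hr)
    have h2 := hF0 r hr
    have h3 : deriv (deriv u) r + (Nm - 1) * (deriv u r / r) ≤ 0 := by nlinarith
    exact mul_nonpos_of_nonpos_of_nonneg h3 (Real.rpow_nonneg hr.1.le _)
  have hvanti : ∀ x y : ℝ, x ∈ Ioo (0:ℝ) 1 → y ∈ Ioo (0:ℝ) 1 → x ≤ y → v y ≤ v x := by
    intro x y hx hy hxy
    apply antitone_helper
      (G := fun z => (deriv (deriv u) z + (Nm - 1) * (deriv u z / z)) * z ^ (Nm - 1)) hxy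
    · intro z hz
      exact hwD (Nm - 1) z ⟨lt_of_lt_of_le hx.1 hz.1, lt_of_le_of_lt hz.2 hy.2⟩
    · intro z hz
      exact hvG z ⟨lt_trans hx.1 hz.1, lt_trans hz.2 hy.2⟩
  have hvle : ∀ r ∈ Ioo (0:ℝ) 1, v r ≤ 0 :=
    fun r hr => mul_nonpos_of_nonpos_of_nonneg (hule r hr) (Real.rpow_nonneg hr.1.le _)
  have hhalf : (1/2 : ℝ) ∈ Ioo (0:ℝ) 1 := by norm_num
  have hne : (v '' Ioo (0:ℝ) 1).Nonempty := ⟨v (1/2), ⟨1/2, hhalf, rfl⟩⟩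
  have hbddv : BddAbove (v '' Ioo (0:ℝ) 1) := by
    refine ⟨0, ?_⟩
    rintro x ⟨r, hr, rfl⟩
    exact hvle r hr
  set L := sSup (v '' Ioo (0:ℝ) 1) with hLdef
  have hLle : L ≤ 0 := csSup_le hne (by rintro x ⟨r, hr, rfl⟩; exact hvle r hr)
  have hLge : 0 ≤ L := by
    by_contra hL'
    push_neg at hL'
    refine aux_unbdd (φ := fun x => -u x) (φ' := fun x => -deriv u x) (r₁ := 1/2)
      hhalf (neg_pos.2 hL') (fun r hr => (hud r hr).neg)
      (fun r hr => by rw [abs_neg]; exact hC r hr) ?_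
    intro x hx
    show (-L) / x ≤ -deriv u x
    have hx01 : x ∈ Ioo (0:ℝ) 1 := ⟨hx.1, by linarith [hx.2]⟩
    have h1 : deriv u x * x ^ (Nm - 1) ≤ L := le_csSup hbddv ⟨x, hx01, rfl⟩
    have h2 : deriv u x * x ≤ deriv u x * x ^ (Nm - 1) :=
      mul_le_mul_of_nonpos_left (hpowle (Nm - 1) hNm1 x hx01) (hule x hx01)
    rw [div_le_iff₀ hx.1]
    have : deriv u x * x ≤ L := le_trans h2 h1
    linarith
  have hL0 : L = 0 := le_antisymm hLle hLge
  have htend : Tendsto (fun r => deriv u r * r ^ (Nm - 1))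
      (nhdsWithin 0 (Ioi 0)) (nhds 0) := by
    refine tendsto_order.2 ⟨?_, ?_⟩
    · intro b hb
      have hbL : b < L := by rw [hL0]; exact hb
      obtain ⟨x, ⟨r', hr', rfl⟩, hbx⟩ := exists_lt_of_lt_csSup hne hbL
      filter_upwards [Ioo_mem_nhdsGT hr'.1] with x hx
      exact lt_of_lt_of_le hbx (hvanti x r' ⟨hx.1, lt_trans hx.2 hr'.2⟩ hr' hx.2.le)
    · intro b hb
      filter_upwards [Ioo_mem_nhdsGT (by norm_num : (0:ℝ) < 1)] with x hx
      exact lt_of_le_of_lt (hvle x hx) hb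
  -- part 3
  set m := sInf (f '' Ioo (0:ℝ) 1) with hmdef
  have hmne : (f '' Ioo (0:ℝ) 1).Nonempty := ⟨f (1/2), ⟨1/2, hhalf, rfl⟩⟩
  have hmbdd : BddBelow (f '' Ioo (0:ℝ) 1) := by
    refine ⟨0, ?_⟩
    rintro x ⟨r, hr, rfl⟩
    exact (hfpos r hr).le
  have hm0 : 0 ≤ m := le_csInf hmne (by rintro x ⟨r, hr, rfl⟩; exact (hfpos r hr).le)
  have hmle : ∀ r ∈ Ioo (0:ℝ) 1, m ≤ f r := fun r hr => csInf_le hmbdd ⟨r, hr, rfl⟩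
  set c₀ := m / (Lam * (Nm - γ)) with hc₀def
  have hc₀0 : 0 ≤ c₀ := div_nonneg hm0 (mul_nonneg hLam.le hγNm.le)
  set V : ℝ → ℝ := fun r => v r + c₀ * r ^ (Nm - γ) with hVdef
  have hVd : ∀ r ∈ Ioo (0:ℝ) 1, HasDerivAt V
      ((deriv (deriv u) r + (Nm - 1) * (deriv u r / r)) * r ^ (Nm - 1)
        + c₀ * ((Nm - γ) * r ^ (Nm - γ - 1))) r :=
    fun r hr => (hwD (Nm - 1) r hr).add
      ((Real.hasDerivAt_rpow_const (Or.inl hr.1.ne')).const_mul c₀)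
  have hVG : ∀ r ∈ Ioo (0:ℝ) 1,
      (deriv (deriv u) r + (Nm - 1) * (deriv u r / r)) * r ^ (Nm - 1)
        + c₀ * ((Nm - γ) * r ^ (Nm - γ - 1)) ≤ 0 := by
    intro r hr
    have h1 := hkey2 r hr (hule r hr)
    have hrp : (0:ℝ) < r ^ (Nm - 1) := Real.rpow_pos_of_pos hr.1 _
    have h2 : deriv (deriv u) r + (Nm - 1) * (deriv u r / r)
        ≤ -(f r * r ^ (-γ)) / Lam := by
      rw [le_div_iff₀ hLam]; linarith
    have h3 : (deriv (deriv u) r + (Nm - 1) * (deriv u r / r)) * r ^ (Nm - 1)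
        ≤ (-(f r * r ^ (-γ)) / Lam) * r ^ (Nm - 1) :=
      mul_le_mul_of_nonneg_right h2 hrp.le
    have h5 : r ^ (-γ) * r ^ (Nm - 1) = r ^ (Nm - γ - 1) := by
      rw [← Real.rpow_add hr.1]; congr 1; ring
    have h6 : (-(f r * r ^ (-γ)) / Lam) * r ^ (Nm - 1) = -(f r / Lam) * r ^ (Nm - γ - 1) := by
      rw [← h5]; ring
    have h8 : c₀ * ((Nm - γ) * r ^ (Nm - γ - 1)) = (m / Lam) * r ^ (Nm - γ - 1) := by
      rw [hc₀def]
      field_simp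
    have h7 : 0 ≤ (f r / Lam - m / Lam) * r ^ (Nm - γ - 1) := by
      apply mul_nonneg _ (Real.rpow_nonneg hr.1.le _)
      apply sub_nonneg.2
      exact (div_le_div_iff_of_pos_right hLam).2 (hmle r hr)
    rw [h8]
    nlinarith [h3, h6, h7]
  have hVanti : ∀ x y : ℝ, x ∈ Ioo (0:ℝ) 1 → y ∈ Ioo (0:ℝ) 1 → x ≤ y → V y ≤ V x := by
    intro x y hx hy hxy
    apply antitone_helper (G := fun z => (deriv (deriv u) z + (Nm - 1) * (deriv u z / z))
      * z ^ (Nm - 1) + c₀ * ((Nm - γ) * z ^ (Nm - γ - 1))) hxy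
    · intro z hz
      exact hVd z ⟨lt_of_lt_of_le hx.1 hz.1, lt_of_le_of_lt hz.2 hy.2⟩
    · intro z hz
      exact hVG z ⟨lt_trans hx.1 hz.1, lt_trans hz.2 hy.2⟩
  have hpow_tend : Tendsto (fun r : ℝ => c₀ * r ^ (Nm - γ)) (nhdsWithin 0 (Ioi 0)) (nhds 0) := by
    have h1 : ContinuousAt (fun r : ℝ => r ^ (Nm - γ)) 0 :=
      Real.continuousAt_rpow_const 0 _ (Or.inr hγNm.le)
    have h2 : Tendsto (fun r : ℝ => r ^ (Nm - γ)) (nhdsWithin 0 (Ioi 0))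
        (nhds ((0:ℝ) ^ (Nm - γ))) := h1.tendsto.mono_left nhdsWithin_le_nhds
    have h3 := h2.const_mul c₀
    simpa [Real.zero_rpow hγNm.ne'] using h3
  have hVtend : Tendsto V (nhdsWithin 0 (Ioi 0)) (nhds 0) := by
    have := htend.add hpow_tend
    simpa using this
  have hVle : ∀ r ∈ Ioo (0:ℝ) 1, V r ≤ 0 := by
    intro r hr
    refine ge_of_tendsto hVtend ?_
    filter_upwards [Ioo_mem_nhdsGT hr.1] with x hx
    exact hVanti x r ⟨hx.1, lt_trans hx.2 hr.2⟩ hr hx.2.le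
  have hpart3 : ∀ r ∈ Ioo (0:ℝ) 1, deriv u r ≤ -c₀ * r ^ (1 - γ) := by
    intro r hr
    have h1 := hVle r hr
    have hrp : (0:ℝ) < r ^ (Nm - 1) := Real.rpow_pos_of_pos hr.1 _
    have h2 : r ^ (Nm - γ) = r ^ (1 - γ) * r ^ (Nm - 1) := by
      rw [← Real.rpow_add hr.1]; congr 1; ring
    have h3 : deriv u r * r ^ (Nm - 1) ≤ (-c₀ * r ^ (1 - γ)) * r ^ (Nm - 1) := by
      simp only [hVdef, hvdef] at h1
      rw [h2] at h1
      linarith [h1]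
    exact le_of_mul_le_mul_right h3 hrp
  -- part 4 : equality case
  have hCf0 : 0 ≤ Cf := le_trans (abs_nonneg _) (hCf (1/2) hhalf)
  set K := Cf / (Lam * (β + 1 - γ)) with hKdef
  have hK0 : 0 ≤ K := div_nonneg hCf0 (mul_nonneg hLam.le hγNp.le)
  have hpart4 : (∀ r ∈ Ioo (0:ℝ) 1, pucciM lam Lam N u r = -(f r * r ^ (-γ))) →
      ∀ r ∈ Ioo (0:ℝ) 1, |deriv u r| ≤ (K + 1) * r ^ (1 - γ) := by
    intro heq
    set W : ℝ → ℝ := fun r => deriv u r * r ^ β + K * r ^ (β + 1 - γ) with hWdef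
    have hWd : ∀ r ∈ Ioo (0:ℝ) 1, HasDerivAt W
        ((deriv (deriv u) r + β * (deriv u r / r)) * r ^ β
          + K * ((β + 1 - γ) * r ^ (β + 1 - γ - 1))) r :=
      fun r hr => (hwD β r hr).add
        ((Real.hasDerivAt_rpow_const (Or.inl hr.1.ne')).const_mul K)
    have hWG : ∀ r ∈ Ioo (0:ℝ) 1,
        0 ≤ (deriv (deriv u) r + β * (deriv u r / r)) * r ^ β
          + K * ((β + 1 - γ) * r ^ (β + 1 - γ - 1)) := by
      intro r hr
      have h1 := hkey3 r hr (hule r hr)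
      rw [heq r hr] at h1
      have hrp : (0:ℝ) < r ^ β := Real.rpow_pos_of_pos hr.1 _
      have h2 : -(f r * r ^ (-γ)) / Lam ≤ deriv (deriv u) r + β * (deriv u r / r) := by
        rw [div_le_iff₀ hLam]; linarith
      have h3 : (-(f r * r ^ (-γ)) / Lam) * r ^ β
          ≤ (deriv (deriv u) r + β * (deriv u r / r)) * r ^ β :=
        mul_le_mul_of_nonneg_right h2 hrp.le
      have h5 : r ^ (-γ) * r ^ β = r ^ (β + 1 - γ - 1) := by
        rw [← Real.rpow_add hr.1]; congr 1; ring
      have h6 : (-(f r * r ^ (-γ)) / Lam) * r ^ β = -(f r / Lam) * r ^ (β + 1 - γ - 1) := by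
        rw [← h5]; ring
      have h8 : K * ((β + 1 - γ) * r ^ (β + 1 - γ - 1)) = (Cf / Lam) * r ^ (β + 1 - γ - 1) := by
        rw [hKdef]
        field_simp
      have h7 : 0 ≤ (Cf / Lam - f r / Lam) * r ^ (β + 1 - γ - 1) := by
        apply mul_nonneg _ (Real.rpow_nonneg hr.1.le _)
        apply sub_nonneg.2
        exact (div_le_div_iff_of_pos_right hLam).2 (le_trans (le_abs_self _) (hCf r hr))
      rw [h8]
      nlinarith [h3, h6, h7]
    have hWmono : ∀ x y : ℝ, x ∈ Ioo (0:ℝ) 1 → y ∈ Ioo (0:ℝ) 1 → x ≤ y → W x ≤ W y := by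
      intro x y hx hy hxy
      apply monotone_helper (G := fun z => (deriv (deriv u) z + β * (deriv u z / z)) * z ^ β
        + K * ((β + 1 - γ) * z ^ (β + 1 - γ - 1))) hxy
      · intro z hz
        exact hWd z ⟨lt_of_lt_of_le hx.1 hz.1, lt_of_le_of_lt hz.2 hy.2⟩
      · intro z hz
        exact hWG z ⟨lt_trans hx.1 hz.1, lt_trans hz.2 hy.2⟩
    have hWge : ∀ r ∈ Ioo (0:ℝ) 1, 0 ≤ W r := by
      intro r₂ hr₂
      by_contra hW'
      push_neg at hW'
      refine aux_unbdd (φ := fun x => -u x) (φ' := fun x => -deriv u x)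
        hr₂ (neg_pos.2 hW') (fun r hr => (hud r hr).neg)
        (fun r hr => by rw [abs_neg]; exact hC r hr) ?_
      intro x hx
      show (-(W r₂)) / x ≤ -deriv u x
      have hx01 : x ∈ Ioo (0:ℝ) 1 := ⟨hx.1, lt_trans hx.2 hr₂.2⟩
      have h1 : W x ≤ W r₂ := hWmono x r₂ hx01 hr₂ hx.2.le
      have h2 : 0 ≤ K * x ^ (β + 1 - γ) := mul_nonneg hK0 (Real.rpow_nonneg hx.1.le _)
      have hWx : W x = deriv u x * x ^ β + K * x ^ (β + 1 - γ) := rfl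
      have h3 : deriv u x * x ^ β ≤ W r₂ := by linarith
      have h4 : deriv u x * x ≤ deriv u x * x ^ β :=
        mul_le_mul_of_nonpos_left (hpowle β hβ1.le x hx01) (hule x hx01)
      rw [div_le_iff₀ hx.1]
      linarith
    intro r hr
    have h1 := hWge r hr
    simp only [hWdef] at h1
    have hrp : (0:ℝ) < r ^ β := Real.rpow_pos_of_pos hr.1 _
    have h2 : r ^ (β + 1 - γ) = r ^ (1 - γ) * r ^ β := by
      rw [← Real.rpow_add hr.1]; congr 1; ring
    rw [h2] at h1
    have h3 : -deriv u r * r ^ β ≤ (K * r ^ (1 - γ)) * r ^ β := by linarith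
    have h4 : -deriv u r ≤ K * r ^ (1 - γ) := le_of_mul_le_mul_right h3 hrp
    have h5 : (0:ℝ) ≤ r ^ (1 - γ) := Real.rpow_nonneg hr.1.le _
    rw [abs_of_nonpos (hule r hr)]
    nlinarith [h4, h5]
  -- assembly
  refine ⟨1/2, hhalf, ?_, htend, ?_, ?_⟩
  · intro r hr
    exact hule r ⟨hr.1, lt_trans hr.2 (by norm_num)⟩
  · intro r hr
    exact hpart3 r ⟨hr.1, lt_trans hr.2 (by norm_num)⟩
  · intro heq
    refine ⟨K + 1, by linarith, ?_⟩
    intro r hr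
    exact hpart4 heq r ⟨hr.1, lt_trans hr.2 (by norm_num)⟩

end
end

section
/- Comparison principle in the punctured ball: let 0 < γ < 2, β ≥ 0, and let f, g : (0,1) → ℝ be continuous with f(r) ≥ g(r) for all r ∈ (0,1). Let u, v : [0,1] → ℝ be continuous on [0,1] and C² on (0,1), satisfying F(D(u''(r), u'(r)/r)) − β·u(r)·r^{−γ} ≥ f(r)·r^{−γ} and F(D(v''(r), v'(r)/r)) − β·v(r)·r^{−γ} ≤ g(r)·r^{−γ} for all r ∈ (0,1). If u(1) ≤ v(1), then u(r) ≤ v(r) for all r ∈ [0,1]. -/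
open Set Real Filter MeasureTheory Matrix Topology

noncomputable section

/-- The `N × N` diagonal matrix with first diagonal entry `a` and the remaining
`N - 1` diagonal entries equal to `b`. -/
def Dmat (N : ℕ) (a b : ℝ) : Matrix (Fin N) (Fin N) ℝ :=
  Matrix.diagonal (fun i => if (i : ℕ) = 0 then a else b)

/-- Uniform ellipticity with constants `0 < lam ≤ Lam`. -/
def UnifElliptic (N : ℕ) (lam Lam : ℝ) (F : Matrix (Fin N) (Fin N) ℝ → ℝ) : Prop :=
  ∀ M P : Matrix (Fin N) (Fin N) ℝ, M.IsSymm → P.PosSemidef →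
    lam * P.trace ≤ F (M + P) - F M ∧ F (M + P) - F M ≤ Lam * P.trace

/-- Rotation invariance. -/
def RotInvariant (N : ℕ) (F : Matrix (Fin N) (Fin N) ℝ → ℝ) : Prop :=
  ∀ O M : Matrix (Fin N) (Fin N) ℝ, Oᵀ * O = 1 → F (Oᵀ * M * O) = F M

/-- Positive one-homogeneity. -/
def PosHomog (N : ℕ) (F : Matrix (Fin N) (Fin N) ℝ → ℝ) : Prop :=
  ∀ t : ℝ, 0 < t → ∀ M : Matrix (Fin N) (Fin N) ℝ, F (t • M) = t * F M

/-- The radial principal eigenvalue `λ̄'_γ(F)` on the punctured unit ball. -/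
def radialEV (N : ℕ) (F : Matrix (Fin N) (Fin N) ℝ → ℝ) (γ : ℝ) : ℝ :=
  sSup {μ : ℝ | ∃ u : ℝ → ℝ, ContDiffOn ℝ 2 u (Ioo 0 1) ∧
    (∀ r ∈ Ioo (0:ℝ) 1, 0 < u r) ∧
    (∀ r ∈ Ioo (0:ℝ) 1,
      F (Dmat N (deriv (deriv u) r) (deriv u r / r)) + μ * u r * r ^ (-γ) ≤ 0)}

/-! ### Auxiliary lemmas -/

lemma Dmat_add (N : ℕ) (x y p q : ℝ) :
    Dmat N x y + Dmat N p q = Dmat N (x + p) (y + q) := by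
  unfold Dmat
  rw [Matrix.diagonal_add]
  exact congrArg Matrix.diagonal (funext fun i => by by_cases h : (i : ℕ) = 0 <;> simp [h])

lemma Dmat_symm (N : ℕ) (x y : ℝ) : (Dmat N x y).IsSymm :=
  Matrix.isSymm_diagonal _

lemma Dmat_psd (N : ℕ) {p q : ℝ} (hp : 0 ≤ p) (hq : 0 ≤ q) : (Dmat N p q).PosSemidef := by
  apply Matrix.PosSemidef.diagonal
  intro i
  dsimp
  split <;> assumption

lemma Dmat_trace {N : ℕ} (hN : 1 ≤ N) (p q : ℝ) :
    (Dmat N p q).trace = p + ((N : ℝ) - 1) * q := by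
  obtain ⟨n, rfl⟩ : ∃ n, N = n + 1 := ⟨N - 1, by omega⟩
  unfold Dmat
  rw [Matrix.trace_diagonal, Fin.sum_univ_succ]
  simp only [Fin.val_zero, if_pos rfl, Fin.val_succ, Nat.succ_ne_zero, if_neg (Nat.succ_ne_zero _)]
  rw [Finset.sum_const, Finset.card_univ, Fintype.card_fin]
  push_cast
  ring

lemma F_bounds {N : ℕ} {lam Lam : ℝ} {F : Matrix (Fin N) (Fin N) ℝ → ℝ}
    (hF1 : UnifElliptic N lam Lam F) (hN : 1 ≤ N)
    {x y z w : ℝ} (hxz : x ≤ z) (hyw : y ≤ w) :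
    lam * ((z - x) + ((N : ℝ) - 1) * (w - y)) ≤ F (Dmat N z w) - F (Dmat N x y) ∧
    F (Dmat N z w) - F (Dmat N x y) ≤ Lam * ((z - x) + ((N : ℝ) - 1) * (w - y)) := by
  have h := hF1 (Dmat N x y) (Dmat N (z - x) (w - y)) (Dmat_symm N x y)
    (Dmat_psd N (by linarith) (by linarith))
  rwa [Dmat_add, Dmat_trace hN, show x + (z - x) = z from by ring,
    show y + (w - y) = w from by ring] at h

/-- Second derivative test: at a local max, the second derivative is nonpositive. -/
lemma isLocalMax_deriv_deriv_nonpos {h : ℝ → ℝ} {r₀ : ℝ}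
    (hmax : IsLocalMax h r₀)
    (hd : ∀ᶠ r in 𝓝 r₀, DifferentiableAt ℝ h r)
    (hd2 : DifferentiableAt ℝ (deriv h) r₀) :
    deriv (deriv h) r₀ ≤ 0 := by
  by_contra hc
  push_neg at hc
  have h0 : deriv h r₀ = 0 := hmax.deriv_eq_zero
  have hslope : Tendsto (slope (deriv h) r₀) (𝓝[≠] r₀) (𝓝 (deriv (deriv h) r₀)) :=
    hasDerivAt_iff_tendsto_slope.1 hd2.hasDerivAt
  have hp : ∀ᶠ r in 𝓝[≠] r₀, 0 < slope (deriv h) r₀ r :=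
    hslope.eventually (eventually_gt_nhds hc)
  have hpos : ∀ᶠ r in 𝓝[>] r₀, 0 < deriv h r := by
    filter_upwards [hp.filter_mono (nhdsWithin_mono _ (fun x hx => ne_of_gt hx)),
      self_mem_nhdsWithin] with r hr hr'
    rw [slope_def_field, h0, sub_zero] at hr
    have h2 : 0 < r - r₀ := sub_pos.2 hr'
    have h3 := mul_pos hr h2
    rwa [div_mul_cancel₀ _ (ne_of_gt h2)] at h3
  have hall : ∀ᶠ r in 𝓝 r₀,
      (DifferentiableAt ℝ h r ∧ h r ≤ h r₀) ∧ (r ∈ Ioi r₀ → 0 < deriv h r) :=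
    (hd.and hmax).and (eventually_nhdsWithin_iff.1 hpos)
  obtain ⟨e, he, H⟩ := Metric.eventually_nhds_iff.1 hall
  set x := r₀ + e / 2 with hx
  have hmem : ∀ y ∈ Icc r₀ x, dist y r₀ < e := by
    intro y hy
    rw [Real.dist_eq, abs_of_nonneg (by linarith [hy.1])]
    have := hy.2
    rw [hx] at this
    linarith
  have hmono : StrictMonoOn h (Icc r₀ x) := by
    apply strictMonoOn_of_deriv_pos (convex_Icc _ _)
    · intro y hy
      exact ((H (hmem y hy)).1.1.continuousAt).continuousWithinAt
    · intro y hy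
      rw [interior_Icc] at hy
      exact (H (hmem y ⟨hy.1.le, hy.2.le⟩)).2 hy.1
  have hlt : h r₀ < h x := by
    apply hmono (left_mem_Icc.2 (by rw [hx]; linarith)) (right_mem_Icc.2 (by rw [hx]; linarith))
    rw [hx]; linarith
  have : h x ≤ h r₀ := (H (hmem x (right_mem_Icc.2 (by rw [hx]; linarith)))).1.2
  linarith

theorem stmt10 (N : ℕ) (hN : 2 ≤ N) (lam Lam : ℝ) (hlam : 0 < lam) (hlL : lam ≤ Lam)
    (hNp : 2 < lam / Lam * ((N : ℝ) - 1) + 1)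
    (F : Matrix (Fin N) (Fin N) ℝ → ℝ)
    (hF1 : UnifElliptic N lam Lam F) (hF2 : RotInvariant N F) (hF3 : PosHomog N F)
    (γ : ℝ) (hγ0 : 0 < γ) (hγ2 : γ < 2) (β : ℝ) (hβ : 0 ≤ β)
    (f g : ℝ → ℝ) (hfc : ContinuousOn f (Ioo 0 1)) (hgc : ContinuousOn g (Ioo 0 1))
    (hfg : ∀ r ∈ Ioo (0:ℝ) 1, g r ≤ f r)
    (u v : ℝ → ℝ)
    (huc : ContinuousOn u (Icc 0 1)) (hvc : ContinuousOn v (Icc 0 1))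
    (hu2 : ContDiffOn ℝ 2 u (Ioo 0 1)) (hv2 : ContDiffOn ℝ 2 v (Ioo 0 1))
    (husub : ∀ r ∈ Ioo (0:ℝ) 1,
      f r * r ^ (-γ) ≤
        F (Dmat N (deriv (deriv u) r) (deriv u r / r)) - β * u r * r ^ (-γ))
    (hvsup : ∀ r ∈ Ioo (0:ℝ) 1,
      F (Dmat N (deriv (deriv v) r) (deriv v r / r)) - β * v r * r ^ (-γ)
        ≤ g r * r ^ (-γ))
    (hbd : u 1 ≤ v 1) :
    ∀ r ∈ Icc (0:ℝ) 1, u r ≤ v r := by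
  have hLam : 0 < Lam := hlam.trans_le hlL
  have hN1 : 1 ≤ N := le_trans (by norm_num) hN
  set δ : ℝ := (lam / Lam * ((N : ℝ) - 1) + 1 - 2) / 2 with hδdef
  have hδ : 0 < δ := by rw [hδdef]; linarith
  have hkey : lam * ((N : ℝ) - 1) = Lam * (2 * δ + 1) := by
    rw [hδdef]
    field_simp
    ring
  -- differentiability facts
  have hdu : ∀ r ∈ Ioo (0:ℝ) 1, DifferentiableAt ℝ u r := fun r hr =>
    (hu2.contDiffAt (isOpen_Ioo.mem_nhds hr)).differentiableAt (by norm_num)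
  have hdv : ∀ r ∈ Ioo (0:ℝ) 1, DifferentiableAt ℝ v r := fun r hr =>
    (hv2.contDiffAt (isOpen_Ioo.mem_nhds hr)).differentiableAt (by norm_num)
  have hdu2 : ∀ r ∈ Ioo (0:ℝ) 1, DifferentiableAt ℝ (deriv u) r := by
    intro r hr
    have h1 : ContDiffOn ℝ 1 (deriv u) (Ioo 0 1) :=
      hu2.deriv_of_isOpen isOpen_Ioo (by norm_num)
    exact (h1.contDiffAt (isOpen_Ioo.mem_nhds hr)).differentiableAt (by norm_num)
  have hdv2 : ∀ r ∈ Ioo (0:ℝ) 1, DifferentiableAt ℝ (deriv v) r := by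
    intro r hr
    have h1 : ContDiffOn ℝ 1 (deriv v) (Ioo 0 1) :=
      hv2.deriv_of_isOpen isOpen_Ioo (by norm_num)
    exact (h1.contDiffAt (isOpen_Ioo.mem_nhds hr)).differentiableAt (by norm_num)
  -- main barrier estimate
  have main : ∀ ε : ℝ, 0 < ε → ∀ r ∈ Ioc (0:ℝ) 1, u r - v r ≤ ε * r ^ (-δ) := by
    intro ε hε
    by_contra hcon
    push_neg at hcon
    obtain ⟨r₁, hr₁, hr₁pos⟩ := hcon
    set h : ℝ → ℝ := fun r => u r - v r - ε * r ^ (-δ) with hhdef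
    have hh1 : 0 < h r₁ := by rw [hhdef]; dsimp; linarith
    obtain ⟨m, hm, hmmax⟩ := (isCompact_Icc (a := (0:ℝ)) (b := 1)).exists_isMaxOn
      (Set.nonempty_Icc.2 zero_le_one) (huc.sub hvc)
    set K : ℝ := max (u m - v m) 0 with hKdef
    have hK1 : 0 < K + 1 := by positivity
    set b : ℝ := (ε / (K + 1)) ^ (1 / δ) with hbdef
    have hb : 0 < b := Real.rpow_pos_of_pos (by positivity) _
    have hbval : ε * b ^ (-δ) = K + 1 := by
      rw [hbdef, ← Real.rpow_mul (by positivity : (0:ℝ) ≤ ε / (K + 1)),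
        show 1 / δ * (-δ) = -1 from by field_simp, Real.rpow_neg_one]
      field_simp
    have hsmall : ∀ r : ℝ, 0 < r → r ≤ b → r ≤ 1 → h r < 0 := by
      intro r hr hrb hr1
      have h1 : u r - v r ≤ K :=
        le_trans (hmmax ⟨hr.le, hr1⟩) (le_max_left _ _)
      have h2 : b ^ (-δ) ≤ r ^ (-δ) :=
        Real.rpow_le_rpow_of_nonpos hr hrb (by linarith)
      have h3 : ε * b ^ (-δ) ≤ ε * r ^ (-δ) := by
        exact mul_le_mul_of_nonneg_left h2 hε.le
      rw [hhdef]; dsimp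
      rw [hbval] at h3
      linarith
    set a : ℝ := min b r₁ / 2 with hadef
    have ha0 : 0 < a := by rw [hadef]; exact div_pos (lt_min hb hr₁.1) two_pos
    have har₁ : a < r₁ := by
      rw [hadef]
      have := min_le_right b r₁
      linarith [lt_min hb hr₁.1]
    have hab : a ≤ b := by
      rw [hadef]
      have := min_le_left b r₁
      have := lt_min hb hr₁.1
      linarith
    have hr₁1 : r₁ < 1 := by
      rcases lt_or_eq_of_le hr₁.2 with hlt | heq
      · exact hlt
      · exfalso
        rw [heq] at hr₁pos
        rw [Real.one_rpow] at hr₁pos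
        linarith
    have ha1 : a < 1 := har₁.trans hr₁1
    -- maximize h on [a,1]
    have hconth : ContinuousOn h (Icc a 1) := by
      have hsub : Icc a 1 ⊆ Icc (0:ℝ) 1 := Icc_subset_Icc ha0.le (le_refl 1)
      have hrp : ContinuousOn (fun r : ℝ => ε * r ^ (-δ)) (Icc a 1) := by
        apply ContinuousOn.mul continuousOn_const
        apply ContinuousOn.rpow_const continuousOn_id
        intro r hr
        exact Or.inl (ne_of_gt (ha0.trans_le hr.1))
      exact ((huc.mono hsub).sub (hvc.mono hsub)).sub hrp
    obtain ⟨r₀, hr₀mem, hr₀max⟩ := (isCompact_Icc (a := a) (b := 1)).exists_isMaxOn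
      (Set.nonempty_Icc.2 ha1.le) hconth
    have hr₀pos : 0 < h r₀ := lt_of_lt_of_le hh1 (hr₀max ⟨har₁.le, hr₁.2⟩)
    have hr₀a : a < r₀ := by
      rcases lt_or_eq_of_le hr₀mem.1 with hlt | heq
      · exact hlt
      · exfalso
        have := hsmall a ha0 hab ha1.le
        rw [heq] at this
        linarith
    have hr₀1 : r₀ < 1 := by
      rcases lt_or_eq_of_le hr₀mem.2 with hlt | heq
      · exact hlt
      · exfalso
        have h1v : h 1 < 0 := by
          rw [hhdef]; dsimp
          rw [Real.one_rpow]
          linarith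
        rw [heq] at hr₀pos
        linarith
    have hr₀Ioo : r₀ ∈ Ioo (0:ℝ) 1 := ⟨ha0.trans hr₀a, hr₀1⟩
    have hloc : IsLocalMax h r₀ := by
      have hnb : Ioo a 1 ∈ 𝓝 r₀ := isOpen_Ioo.mem_nhds ⟨hr₀a, hr₀1⟩
      filter_upwards [hnb] with r hr using hr₀max ⟨hr.1.le, hr.2.le⟩
    -- derivatives of h on Ioo 0 1
    have hψ : ∀ r ∈ Ioo (0:ℝ) 1,
        HasDerivAt (fun x : ℝ => ε * x ^ (-δ)) (ε * (-δ * r ^ (-δ - 1))) r := by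
      intro r hr
      exact (Real.hasDerivAt_rpow_const (x := r) (p := -δ)
        (Or.inl (ne_of_gt hr.1))).const_mul ε
    have hdh : ∀ r ∈ Ioo (0:ℝ) 1,
        HasDerivAt h (deriv u r - deriv v r - ε * (-δ * r ^ (-δ - 1))) r := by
      intro r hr
      exact (((hdu r hr).hasDerivAt.sub (hdv r hr).hasDerivAt).sub (hψ r hr))
    have hdh' : ∀ r ∈ Ioo (0:ℝ) 1,
        deriv h r = deriv u r - deriv v r - ε * (-δ * r ^ (-δ - 1)) :=
      fun r hr => (hdh r hr).deriv
    have e0 : deriv h r₀ = 0 := hloc.deriv_eq_zero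
    have e1 : deriv u r₀ - deriv v r₀ = -(ε * δ * r₀ ^ (-δ - 1)) := by
      have h4 := hdh' r₀ hr₀Ioo
      rw [e0] at h4
      have h5 : ε * (-δ * r₀ ^ (-δ - 1)) = -(ε * δ * r₀ ^ (-δ - 1)) := by ring
      linarith
    -- second derivative
    have hψ2 : HasDerivAt (fun x : ℝ => ε * (-δ * x ^ (-δ - 1)))
        (ε * (-δ * ((-δ - 1) * r₀ ^ (-δ - 2)))) r₀ := by
      have h1 := ((Real.hasDerivAt_rpow_const (x := r₀) (p := -δ - 1)
        (Or.inl (ne_of_gt hr₀Ioo.1))).const_mul (-δ)).const_mul ε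
      have hexp : (-δ - 1 - 1 : ℝ) = -δ - 2 := by ring
      rw [hexp] at h1
      exact h1
    have heqev : deriv h =ᶠ[𝓝 r₀]
        (fun r => deriv u r - deriv v r - ε * (-δ * r ^ (-δ - 1))) := by
      filter_upwards [isOpen_Ioo.mem_nhds hr₀Ioo] with r hr using hdh' r hr
    have hG : HasDerivAt (fun r => deriv u r - deriv v r - ε * (-δ * r ^ (-δ - 1)))
        (deriv (deriv u) r₀ - deriv (deriv v) r₀ - ε * (-δ * ((-δ - 1) * r₀ ^ (-δ - 2)))) r₀ :=
      (((hdu2 r₀ hr₀Ioo).hasDerivAt.sub (hdv2 r₀ hr₀Ioo).hasDerivAt).sub hψ2)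
    have e2' : deriv (deriv h) r₀ =
        deriv (deriv u) r₀ - deriv (deriv v) r₀ - ε * (-δ * ((-δ - 1) * r₀ ^ (-δ - 2))) := by
      rw [heqev.deriv_eq]
      exact hG.deriv
    have hdh2 : DifferentiableAt ℝ (deriv h) r₀ :=
      (heqev.differentiableAt_iff).2 hG.differentiableAt
    have hdiffev : ∀ᶠ r in 𝓝 r₀, DifferentiableAt ℝ h r := by
      filter_upwards [isOpen_Ioo.mem_nhds hr₀Ioo] with r hr using (hdh r hr).differentiableAt
    have e2 : deriv (deriv h) r₀ ≤ 0 :=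
      isLocalMax_deriv_deriv_nonpos hloc hdiffev hdh2
    -- matrix estimates
    set t : ℝ := ε * δ * r₀ ^ (-δ - 2) with htdef
    have hrp2 : 0 < r₀ ^ (-δ - 2) := Real.rpow_pos_of_pos hr₀Ioo.1 _
    have ht : 0 < t := mul_pos (mul_pos hε hδ) hrp2
    set A : ℝ := deriv (deriv u) r₀ with hA
    set C : ℝ := deriv (deriv v) r₀ with hC
    set B : ℝ := deriv u r₀ / r₀ with hB
    set D : ℝ := deriv v r₀ / r₀ with hD
    have hAC : A - C ≤ (δ + 1) * t := by
      have hEq : ε * (-δ * ((-δ - 1) * r₀ ^ (-δ - 2))) = (δ + 1) * t := by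
        rw [htdef]; ring
      rw [e2'] at e2
      linarith
    have hrpow_div : r₀ ^ (-δ - 1) / r₀ = r₀ ^ (-δ - 2) := by
      rw [show (-δ - 1 : ℝ) = (-δ - 2) + 1 from by ring, Real.rpow_add hr₀Ioo.1, Real.rpow_one,
        mul_div_cancel_right₀ _ (ne_of_gt hr₀Ioo.1)]
    have hBD : D - B = t := by
      rw [hB, hD, htdef]
      rw [div_sub_div_same]
      rw [show deriv v r₀ - deriv u r₀ = ε * δ * r₀ ^ (-δ - 1) from by linarith [e1]]
      rw [mul_div_assoc, hrpow_div]
    -- upper bound on F(Dmat A B) - F(Dmat C D)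
    have step1 := (F_bounds hF1 hN1 (show A ≤ C + (δ + 1) * t from by linarith)
      (show B ≤ D from by linarith)).1
    have hδ1t : 0 < (δ + 1) * t := mul_pos (by linarith) ht
    have step2 := (F_bounds hF1 hN1 (show C ≤ C + (δ + 1) * t from by linarith)
      (le_refl D)).2
    have hNge : (1:ℝ) ≤ (N : ℝ) - 1 := by
      have : (2:ℝ) ≤ (N : ℝ) := by exact_mod_cast hN
      linarith
    have hFup : F (Dmat N A B) ≤ F (Dmat N C D) - Lam * δ * t := by
      have h1 : lam * (((N : ℝ) - 1) * t) ≤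
          lam * ((C + (δ + 1) * t - A) + ((N : ℝ) - 1) * (D - B)) := by
        have hinner : ((N : ℝ) - 1) * t ≤ (C + (δ + 1) * t - A) + ((N : ℝ) - 1) * (D - B) := by
          rw [hBD]
          linarith
        exact mul_le_mul_of_nonneg_left hinner hlam.le
      have h2 : Lam * ((C + (δ + 1) * t - C) + ((N : ℝ) - 1) * (D - D)) =
          Lam * ((δ + 1) * t) := by ring_nf
      rw [h2] at step2
      have hcomb : F (Dmat N A B) ≤ F (Dmat N C D) + Lam * ((δ + 1) * t) -
          lam * (((N : ℝ) - 1) * t) := by linarith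
      have harith : Lam * ((δ + 1) * t) - lam * (((N : ℝ) - 1) * t) = -(Lam * δ * t) := by
        have : lam * (((N : ℝ) - 1) * t) = Lam * (2 * δ + 1) * t := by
          rw [← mul_assoc, hkey]
        rw [this]
        ring
      linarith
    -- lower bound on F(Dmat A B) - F(Dmat C D)
    have hrγ : 0 < r₀ ^ (-γ) := Real.rpow_pos_of_pos hr₀Ioo.1 _
    have huv : 0 < u r₀ - v r₀ := by
      have hψpos : 0 < ε * r₀ ^ (-δ) := mul_pos hε (Real.rpow_pos_of_pos hr₀Ioo.1 _)
      have : h r₀ = u r₀ - v r₀ - ε * r₀ ^ (-δ) := rfl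
      linarith
    have h1 := husub r₀ hr₀Ioo
    have h2 := hvsup r₀ hr₀Ioo
    have h3 := hfg r₀ hr₀Ioo
    have h3' : g r₀ * r₀ ^ (-γ) ≤ f r₀ * r₀ ^ (-γ) :=
      mul_le_mul_of_nonneg_right h3 hrγ.le
    have hbterm : 0 ≤ β * u r₀ * r₀ ^ (-γ) - β * v r₀ * r₀ ^ (-γ) := by
      have : β * u r₀ * r₀ ^ (-γ) - β * v r₀ * r₀ ^ (-γ) =
          β * (u r₀ - v r₀) * r₀ ^ (-γ) := by ring
      rw [this]
      exact mul_nonneg (mul_nonneg hβ huv.le) hrγ.le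
    have hFlow : F (Dmat N C D) ≤ F (Dmat N A B) := by
      linarith [h1, h2, h3', hbterm]
    linarith [hFup, hFlow, mul_pos (mul_pos hLam hδ) ht]
  -- conclude on Ioc
  have hIoc : ∀ r ∈ Ioc (0:ℝ) 1, u r ≤ v r := by
    intro r hr
    have hc : 0 < r ^ (-δ) := Real.rpow_pos_of_pos hr.1 _
    by_contra hlt
    push_neg at hlt
    have hε : 0 < (u r - v r) / (2 * r ^ (-δ)) := by
      apply div_pos (by linarith) (by positivity)
    have := main _ hε r hr
    rw [div_mul_eq_mul_div, mul_comm] at this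
    have h2 : r ^ (-δ) * (u r - v r) / (2 * r ^ (-δ)) = (u r - v r) / 2 := by
      rw [mul_comm (2:ℝ) (r ^ (-δ))]
      rw [mul_div_mul_left _ _ (ne_of_gt hc)]
    rw [h2] at this
    linarith
  -- conclude on Icc
  intro r hr
  rcases eq_or_lt_of_le hr.1 with heq | hpos
  · subst heq
    have hne : (𝓝[Ioc (0:ℝ) 1] (0:ℝ)).NeBot := by
      apply mem_closure_iff_nhdsWithin_neBot.1
      rw [closure_Ioc (by norm_num : (0:ℝ) ≠ 1)]
      exact ⟨le_refl 0, zero_le_one⟩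
    have hut : Tendsto u (𝓝[Ioc (0:ℝ) 1] 0) (𝓝 (u 0)) :=
      (huc 0 ⟨le_refl 0, zero_le_one⟩).mono_left (nhdsWithin_mono 0 Ioc_subset_Icc_self)
    have hvt : Tendsto v (𝓝[Ioc (0:ℝ) 1] 0) (𝓝 (v 0)) :=
      (hvc 0 ⟨le_refl 0, zero_le_one⟩).mono_left (nhdsWithin_mono 0 Ioc_subset_Icc_self)
    exact le_of_tendsto_of_tendsto hut hvt
      (eventually_mem_nhdsWithin.mono fun x hx => hIoc x hx)
  · exact hIoc r ⟨hpos, hr.2⟩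

end
end
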